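/- Let D ≥ 1, n ≥ 3, and let T : (Fin n → Fin D × Fin D) → ℝ be a pair tensor with within-pair symmetry, slot-exchange symmetry, and satisfying the cyclic identity. Then every component of T of the form F₂ vanishes: for any slot assignment P : Fin n → Fin D × Fin D and pairwise distinct slots k, l, m such that P k = (a,b), P l = (a,c), P m = (a,d) for some common a and some b, c, d ∈ Fin D, we have T P = 0. -/
import Mathlib


/-- A pair tensor has within-pair symmetry if its value is unchanged when the
two entries of any single pair-slot are swapped. -/
def WithinPairSymm {n D : ℕ} (T : (Fin n → Fin D × Fin D) → ℝ) : Prop :=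
  ∀ (P : Fin n → Fin D × Fin D) (k : Fin n),
    T (Function.update P k ((P k).2, (P k).1)) = T P

/-- A pair tensor has slot-exchange symmetry if its value is unchanged under
precomposition with any permutation of the slots. -/
def SlotExchangeSymm {n D : ℕ} (T : (Fin n → Fin D × Fin D) → ℝ) : Prop :=
  ∀ (P : Fin n → Fin D × Fin D) (σ : Equiv.Perm (Fin n)), T (P ∘ σ) = T P

/-- A pair tensor satisfies the cyclic identity if for any two distinct slots,
any fixed assignment of the remaining slots, and any indices `a b c d`, the
cyclic sum of its components vanishes. -/
def CyclicIdentity {n D : ℕ} (T : (Fin n → Fin D × Fin D) → ℝ) : Prop :=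
  ∀ (P : Fin n → Fin D × Fin D) (k l : Fin n), k ≠ l →
    ∀ a b c d : Fin D,
      T (Function.update (Function.update P k (a, b)) l (c, d)) +
      T (Function.update (Function.update P k (a, c)) l (d, b)) +
      T (Function.update (Function.update P k (a, d)) l (b, c)) = 0

lemma update2_comp_swap {α β : Type*} [DecidableEq α] (f : α → β) (k l : α) (u v : β)
    (hkl : k ≠ l) :
    (Function.update (Function.update f k u) l v) ∘ (Equiv.swap k l) =
      Function.update (Function.update f k v) l u := by
  funext x
  simp only [Function.comp_apply]
  rcases eq_or_ne x k with rfl | hxk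
  · rw [Equiv.swap_apply_left, Function.update_self,
      Function.update_of_ne hkl, Function.update_self]
  · rcases eq_or_ne x l with rfl | hxl
    · rw [Equiv.swap_apply_right, Function.update_of_ne hkl,
        Function.update_self, Function.update_self]
    · rw [Equiv.swap_apply_of_ne_of_ne hxk hxl, Function.update_of_ne hxl,
        Function.update_of_ne hxk, Function.update_of_ne hxl, Function.update_of_ne hxk]


theorem stmt_5 (D n : ℕ) (hD : 1 ≤ D) (hn : 3 ≤ n)
    (T : (Fin n → Fin D × Fin D) → ℝ)
    (hwp : WithinPairSymm T) (hse : SlotExchangeSymm T)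
    (hcyc : CyclicIdentity T) :
    ∀ (P : Fin n → Fin D × Fin D) (k l m : Fin n),
      k ≠ l → k ≠ m → l ≠ m →
      ∀ a b c d : Fin D, P k = (a, b) → P l = (a, c) → P m = (a, d) →
      T P = 0 := by
  intro P k l m hkl hkm hlm a b c d hPk hPl hPm
  classical
  set G : Fin n → Fin D × Fin D :=
    Function.update (Function.update P k (a, a)) l (c, b) with hG
  have hGk : G k = (a, a) := by
    rw [hG, Function.update_of_ne hkl, Function.update_self]
  have hGm : G m = (a, d) := by
    rw [hG, Function.update_of_ne hlm.symm, Function.update_of_ne hkm.symm, hPm]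
  -- Step 1: cyclic identity on slots k, l gives 2 T P + T G = 0
  have e1 : Function.update (Function.update P k (a, b)) l (a, c) = P := by
    rw [← hPk, Function.update_eq_self, ← hPl, Function.update_eq_self]
  have e3 : T (Function.update (Function.update P k (a, c)) l (b, a)) = T P := by
    have hw := hwp (Function.update (Function.update P k (a, c)) l (b, a)) l
    simp only [Function.update_self, Function.update_idem] at hw
    rw [← hw]
    have hs := hse (Function.update (Function.update P k (a, c)) l (a, b)) (Equiv.swap k l)
    rw [update2_comp_swap P k l (a, c) (a, b) hkl, e1] at hs
    exact hs.symm
  have h1 := hcyc P k l hkl a b a c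
  rw [e1, e3, ← hG] at h1
  -- Step 2: cyclic identity on slots k, m of G gives 3 T G = 0
  have f1 : Function.update (Function.update G k (a, a)) m (a, d) = G := by
    rw [← hGk, Function.update_eq_self, ← hGm, Function.update_eq_self]
  have f2 : T (Function.update (Function.update G k (a, a)) m (d, a)) = T G := by
    rw [← hGk, Function.update_eq_self]
    have hw := hwp (Function.update G m (d, a)) m
    simp only [Function.update_self, Function.update_idem] at hw
    rw [← hGm, Function.update_eq_self] at hw
    exact hw.symm
  have f3 : T (Function.update (Function.update G k (a, d)) m (a, a)) = T G := by
    have hs := hse (Function.update (Function.update G k (a, d)) m (a, a)) (Equiv.swap k m)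
    rw [update2_comp_swap G k m (a, d) (a, a) hkm, f1] at hs
    exact hs.symm
  have h2 := hcyc G k m hkm a a a d
  rw [f1, f2, f3] at h2
  have hG0 : T G = 0 := by linarith
  linarith
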